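/- Let s ≥ 1 be an integer and c > 0 a real number. For each N ∈ ℕ let (a_N(n))_{n∈ℕ} be real numbers satisfying |a_N(n)| ≤ e^{-cn} for all n, and suppose a_N(n) → e^{-cn} as N → ∞ for each fixed n. Then for each N the series g_N := ∑_{n=0}^∞ a_N(n)·Q_n^s converges in L²(ν_s), and ∫ |g_N − f_c| dν_s → 0 as N → ∞, where f_c(x) = (e^{c}+√s)/(e^{c}+e^{-c}+√s−x) is the density of η_c^s with respect to ν_s. -/

import Mathlib

open MeasureTheory Polynomial Filter

/-- The orthogonal polynomials `Q_n^s`: `Q_0 = 1`, `Q_1 = X`,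
`X * Q_n = Q_{n+1} + √s * Q_n + Q_{n-1}`. -/
noncomputable def Qpoly (s : ℕ) : ℕ → Polynomial ℝ
  | 0 => 1
  | 1 => Polynomial.X
  | (n + 2) => Polynomial.X * Qpoly s (n + 1)
      - Polynomial.C (Real.sqrt s) * Qpoly s (n + 1) - Qpoly s n

/-- Chebyshev polynomials of the second kind: `P_0 = 1`, `P_1 = X`,
`X * P_n = P_{n+1} + P_{n-1}`. -/
noncomputable def Ppoly : ℕ → Polynomial ℝ
  | 0 => 1
  | 1 => Polynomial.X
  | (n + 2) => Polynomial.X * Ppoly (n + 1) - Ppoly n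

/-- The density of the absolutely continuous part of `ν_s`. -/
noncomputable def nuDensity (s : ℕ) (x : ℝ) : ℝ :=
  Real.sqrt (4 - (x - Real.sqrt s) ^ 2) / (2 * Real.pi * (x * Real.sqrt s + 1))

/-- The free Meixner measure `ν_s`. -/
noncomputable def nuMeas (s : ℕ) : Measure ℝ :=
  volume.withDensity (fun x => ENNReal.ofReal
      (if |x - Real.sqrt s| ≤ 2 then nuDensity s x else 0))
    + ENNReal.ofReal (1 - 1 / (s : ℝ)) • Measure.dirac (-1 / Real.sqrt s)

/-- The density `f_c`. -/
noncomputable def fc (s : ℕ) (c x : ℝ) : ℝ :=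
  (Real.exp c + Real.sqrt s) / (Real.exp c + Real.exp (-c) + Real.sqrt s - x)

/-- The measure `η_c^s = f_c · ν_s + 1_{c<0} ((e^{-c}-e^c)/(e^{-c}+√s)) δ_{e^c+√s+e^{-c}}`. -/
noncomputable def etaMeas (s : ℕ) (c : ℝ) : Measure ℝ :=
  (nuMeas s).withDensity (fun x => ENNReal.ofReal (fc s c x))
    + (if c < 0 then
        ENNReal.ofReal ((Real.exp (-c) - Real.exp c) / (Real.exp (-c) + Real.sqrt s))
      else 0) • Measure.dirac (Real.exp c + Real.sqrt s + Real.exp (-c))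

/-- Total variation distance between two Borel measures on `ℝ`. -/
noncomputable def dTV (μ ν : Measure ℝ) : ℝ :=
  ⨆ A : {A : Set ℝ // MeasurableSet A}, |(μ A.1).toReal - (ν A.1).toReal|


open scoped ENNReal

lemma Qpoly_eval_step (s n : ℕ) (x : ℝ) :
    (Qpoly s (n+2)).eval x
      = (x - Real.sqrt s) * (Qpoly s (n+1)).eval x - (Qpoly s n).eval x := by
  simp [Qpoly]; ring

lemma Qpoly_invariant (s n : ℕ) (x : ℝ) :
    (Qpoly s (n+1)).eval x ^ 2
      - (x - Real.sqrt s) * (Qpoly s n).eval x * (Qpoly s (n+1)).eval x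
      + (Qpoly s n).eval x ^ 2
    = Real.sqrt s * (x - Real.sqrt s) + s + 1 := by
  induction n with
  | zero =>
    have h : Real.sqrt s ^ 2 = (s : ℝ) := Real.sq_sqrt (Nat.cast_nonneg s)
    simp only [Qpoly, Polynomial.eval_one, Polynomial.eval_X]
    nlinarith [h]
  | succ n ih =>
    rw [Qpoly_eval_step]
    nlinarith [ih]

lemma Qpoly_abs_step (s n : ℕ) (x : ℝ) (hx : |x - Real.sqrt s| ≤ 2) :
    |(Qpoly s (n+1)).eval x| ≤ |(Qpoly s n).eval x| + (Real.sqrt s + 1) := by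
  have hinv := Qpoly_invariant s n x
  set A := (Qpoly s (n+1)).eval x
  set B := (Qpoly s n).eval x
  have h1 : (|A| - |B|) ^ 2 ≤ (Real.sqrt s + 1) ^ 2 := by
    have h2 : (x - Real.sqrt s) * B * A ≤ |x - Real.sqrt s| * |B| * |A| := by
      calc (x - Real.sqrt s) * B * A ≤ |(x - Real.sqrt s) * B * A| := le_abs_self _
      _ = |x - Real.sqrt s| * |B| * |A| := by rw [abs_mul, abs_mul]
    have h3 : |x - Real.sqrt s| * |B| * |A| ≤ 2 * (|B| * |A|) := by
      have := abs_nonneg B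
      have := abs_nonneg A
      nlinarith [mul_nonneg (abs_nonneg B) (abs_nonneg A)]
    have hs0 : (0:ℝ) ≤ Real.sqrt s := Real.sqrt_nonneg _
    have hs2 : Real.sqrt s * (x - Real.sqrt s) ≤ 2 * Real.sqrt s := by
      nlinarith [le_abs_self (x - Real.sqrt s)]
    have hA : A^2 = |A|^2 := (sq_abs A).symm
    have hB : B^2 = |B|^2 := (sq_abs B).symm
    have hss : Real.sqrt s ^ 2 = (s:ℝ) := Real.sq_sqrt (Nat.cast_nonneg s)
    nlinarith [hinv]
  have hs1 : (0:ℝ) ≤ Real.sqrt s + 1 := by positivity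
  nlinarith [h1, hs1]

lemma Qpoly_bound (s n : ℕ) (x : ℝ) (hx : |x - Real.sqrt s| ≤ 2) :
    |(Qpoly s n).eval x| ≤ (Real.sqrt s + 1) * (n + 1) := by
  induction n with
  | zero =>
    have := Real.sqrt_nonneg (s:ℝ)
    simp only [Qpoly, Polynomial.eval_one, abs_one, Nat.cast_zero]
    linarith
  | succ n ih =>
    have := Qpoly_abs_step s n x hx
    have hs0 : (0:ℝ) ≤ Real.sqrt s := Real.sqrt_nonneg _
    push_cast
    push_cast at ih
    nlinarith

lemma Qpoly_atom (s : ℕ) (hs : 1 ≤ s) (n : ℕ) :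
    (Qpoly s n).eval (-1 / Real.sqrt s) = (-1 / Real.sqrt s) ^ n := by
  have hs0 : (0:ℝ) < Real.sqrt s := Real.sqrt_pos.mpr (by exact_mod_cast hs)
  have hss : Real.sqrt s * Real.sqrt s = (s:ℝ) := Real.mul_self_sqrt (Nat.cast_nonneg s)
  induction n using Nat.strong_induction_on with
  | _ n ih =>
    match n with
    | 0 => simp [Qpoly]
    | 1 => simp [Qpoly]
    | (m+2) =>
      rw [Qpoly_eval_step, ih (m+1) (by omega), ih m (by omega)]
      have key : ((-1 / Real.sqrt s) - Real.sqrt s) * (-1 / Real.sqrt s) - 1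
          = (-1 / Real.sqrt s)^2 := by
        have hne : Real.sqrt s ≠ 0 := ne_of_gt hs0
        field_simp
        ring
      calc ((-1 / Real.sqrt s) - Real.sqrt s) * (-1 / Real.sqrt s) ^ (m+1)
            - (-1 / Real.sqrt s) ^ m
          = (-1 / Real.sqrt s) ^ m
              * (((-1 / Real.sqrt s) - Real.sqrt s) * (-1 / Real.sqrt s) - 1) := by ring
        _ = (-1 / Real.sqrt s) ^ m * (-1 / Real.sqrt s)^2 := by rw [key]
        _ = (-1 / Real.sqrt s) ^ (m+2) := by ring

lemma nuDensity_le (s : ℕ) (hs : 1 ≤ s) (x : ℝ) (hx : |x - Real.sqrt s| ≤ 2) :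
    nuDensity s x ≤ (1 / Real.pi) * (x - (Real.sqrt s - 2)) ^ (-(1:ℝ)/2) := by
  have hs1 : (1:ℝ) ≤ Real.sqrt s := by
    rw [show (1:ℝ) = Real.sqrt 1 by simp]
    exact Real.sqrt_le_sqrt (by exact_mod_cast hs)
  set u := x - (Real.sqrt s - 2) with hu
  have hu0 : 0 ≤ u := by
    have := abs_le.mp hx
    simp only [hu]; linarith [this.1]
  rcases eq_or_lt_of_le hu0 with h0 | hpos
  · -- u = 0 : x = √s - 2, numerator is 0
    have hx2 : x - Real.sqrt s = -2 := by simp only [hu] at h0; linarith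
    have h4 : 4 - (x - Real.sqrt s)^2 = 0 := by rw [hx2]; norm_num
    have : nuDensity s x = 0 := by
      simp [nuDensity, h4]
    rw [this, ← h0]
    have : ((0:ℝ)) ^ (-(1:ℝ)/2) = 0 := by
      rw [Real.zero_rpow]; norm_num
    rw [this, mul_zero]
  · -- u > 0
    have hnum : Real.sqrt (4 - (x - Real.sqrt s) ^ 2) ≤ 2 * Real.sqrt u := by
      have h42 : Real.sqrt 4 = 2 := by
        rw [show (4:ℝ) = 2^2 by norm_num, Real.sqrt_sq (by norm_num : (0:ℝ) ≤ 2)]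
      rw [show (2:ℝ) * Real.sqrt u = Real.sqrt (4 * u) by
        rw [Real.sqrt_mul (by norm_num : (0:ℝ) ≤ 4), h42]]
      apply Real.sqrt_le_sqrt
      have : x - Real.sqrt s = u - 2 := by simp only [hu]; ring
      nlinarith [this, hu0]
    have hden : u ≤ x * Real.sqrt s + 1 := by
      have hss : Real.sqrt s * Real.sqrt s = (s:ℝ) := Real.mul_self_sqrt (Nat.cast_nonneg s)
      have : x * Real.sqrt s + 1 = Real.sqrt s * u + (Real.sqrt s - 1)^2 := by
        simp only [hu]; nlinarith [hss]
      nlinarith [sq_nonneg (Real.sqrt s - 1), hu0]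
    have hpi : (0:ℝ) < Real.pi := Real.pi_pos
    have h1 : nuDensity s x ≤ (2 * Real.sqrt u) / (2 * Real.pi * u) := by
      apply div_le_div₀ (by positivity) hnum (by positivity)
      nlinarith [hpi]
    refine h1.trans (le_of_eq ?_)
    have hsu : Real.sqrt u > 0 := Real.sqrt_pos.mpr hpos
    have hmul : Real.sqrt u * Real.sqrt u = u := Real.mul_self_sqrt hu0
    have hr : u ^ (-(1:ℝ)/2) = (Real.sqrt u)⁻¹ := by
      rw [show (-(1:ℝ)/2) = -(1/2) by ring, Real.rpow_neg hu0, ← Real.sqrt_eq_rpow]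
    rw [hr]
    field_simp
    nlinarith [hmul]

lemma nuMeas_finite (s : ℕ) (hs : 1 ≤ s) : IsFiniteMeasure (nuMeas s) := by
  constructor
  rw [nuMeas, Measure.add_apply, Measure.smul_apply]
  have h2 : (ENNReal.ofReal (1 - 1 / (s : ℝ)) • Measure.dirac (-1 / Real.sqrt s)) Set.univ < ∞ := by
    simp [lt_top_iff_ne_top]
  have h1 : volume.withDensity (fun x => ENNReal.ofReal
      (if |x - Real.sqrt s| ≤ 2 then nuDensity s x else 0)) Set.univ < ∞ := by
    rw [withDensity_apply _ MeasurableSet.univ, Measure.restrict_univ]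
    set a := Real.sqrt s - 2 with ha
    set b := Real.sqrt s + 2 with hb
    set F : ℝ → ℝ := (Set.Icc a b).indicator (fun x => (1 / Real.pi) * (x - a) ^ (-(1:ℝ)/2))
      with hF
    have hFint : Integrable F volume := by
      apply IntegrableOn.integrable_indicator _ measurableSet_Icc
      have : IntervalIntegrable (fun x : ℝ => x ^ (-(1:ℝ)/2)) volume 0 (b - a) :=
        intervalIntegral.intervalIntegrable_rpow' (by norm_num)
      have h3 := (this.comp_sub_right a)
      rw [zero_add] at h3
      have hba : b - a + a = b := by ring
      rw [hba] at h3
      have h4 : IntervalIntegrable (fun x : ℝ => (x - a) ^ (-(1:ℝ)/2)) volume a b := h3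
      have h5 := (intervalIntegrable_iff_integrableOn_Icc_of_le (by simp only [ha, hb]; linarith)).mp h4
      exact (h5.const_mul _)
    have hle : ∀ x, ENNReal.ofReal (if |x - Real.sqrt s| ≤ 2 then nuDensity s x else 0)
        ≤ ENNReal.ofReal (F x) := by
      intro x
      by_cases hx : |x - Real.sqrt s| ≤ 2
      · rw [if_pos hx]
        apply ENNReal.ofReal_le_ofReal
        have hxm : x ∈ Set.Icc a b := by
          have := abs_le.mp hx
          constructor <;> [simp only [ha]; simp only [hb]] <;> linarith [this.1, this.2]
        rw [hF, Set.indicator_of_mem hxm]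
        exact nuDensity_le s hs x hx
      · rw [if_neg hx]
        simp
    calc ∫⁻ x, ENNReal.ofReal (if |x - Real.sqrt s| ≤ 2 then nuDensity s x else 0) ∂volume
        ≤ ∫⁻ x, ENNReal.ofReal (F x) ∂volume := lintegral_mono hle
      _ < ∞ := hFint.lintegral_lt_top
  exact ENNReal.add_lt_top.mpr ⟨h1, h2⟩

lemma nuMeas_ae_good (s : ℕ) (hs : 1 ≤ s) :
    ∀ᵐ x ∂(nuMeas s), |x - Real.sqrt s| ≤ 2 ∨ x = -1 / Real.sqrt s := by
  have hmeas : MeasurableSet {x : ℝ | ¬(|x - Real.sqrt s| ≤ 2 ∨ x = -1 / Real.sqrt s)} := by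
    apply MeasurableSet.compl
    apply MeasurableSet.union
    · exact measurableSet_le ((measurable_id.sub measurable_const).abs) measurable_const
    · exact measurableSet_eq
  rw [ae_iff]
  rw [nuMeas, Measure.add_apply, Measure.smul_apply, Measure.dirac_apply' _ hmeas]
  rw [withDensity_apply _ hmeas]
  have h1 : ∫⁻ x in {x : ℝ | ¬(|x - Real.sqrt s| ≤ 2 ∨ x = -1 / Real.sqrt s)},
      ENNReal.ofReal (if |x - Real.sqrt s| ≤ 2 then nuDensity s x else 0) ∂volume = 0 := by
    rw [setLIntegral_congr_fun hmeas ?_]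
    · exact lintegral_zero
    · intro x hx
      simp only [Set.mem_setOf_eq, not_or] at hx
      simp [if_neg hx.1]
  rw [h1]
  have h2 : Set.indicator {x : ℝ | ¬(|x - Real.sqrt s| ≤ 2 ∨ x = -1 / Real.sqrt s)}
      (1 : ℝ → ℝ≥0∞) (-1 / Real.sqrt s) = 0 := by
    apply Set.indicator_of_notMem
    simp
  rw [h2]
  simp

lemma Qpoly_good_bound (s : ℕ) (hs : 1 ≤ s) (x : ℝ)
    (hx : |x - Real.sqrt s| ≤ 2 ∨ x = -1 / Real.sqrt s) (n : ℕ) :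
    |(Qpoly s n).eval x| ≤ (Real.sqrt s + 1) * (n + 1) := by
  rcases hx with hx | hx
  · exact Qpoly_bound s n x hx
  · subst hx
    rw [Qpoly_atom s hs n]
    have hs1 : (1:ℝ) ≤ Real.sqrt s := by
      rw [show (1:ℝ) = Real.sqrt 1 by simp]
      exact Real.sqrt_le_sqrt (by exact_mod_cast hs)
    have h1 : |(-1 / Real.sqrt s) ^ n| = (1 / Real.sqrt s) ^ n := by
      rw [abs_pow]
      congr 1
      rw [abs_div, abs_neg, abs_one, abs_of_nonneg (by linarith : (0:ℝ) ≤ Real.sqrt s)]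
    rw [h1]
    have h2 : (1 / Real.sqrt s) ^ n ≤ 1 := by
      apply pow_le_one₀ (by positivity)
      rw [div_le_one (by linarith)]; linarith
    have : (1:ℝ) ≤ (Real.sqrt s + 1) * (n + 1) := by
      have hn0 : (0:ℝ) ≤ (n:ℝ) := Nat.cast_nonneg n
      have : (1:ℝ) ≤ (n:ℝ) + 1 := by linarith
      nlinarith
    linarith

lemma summable_B (K r : ℝ) (h0 : 0 ≤ r) (h1 : r < 1) :
    Summable (fun n : ℕ => K * (n + 1) * r ^ n) := by
  have hn : ‖r‖ < 1 := by rwa [Real.norm_eq_abs, abs_of_nonneg h0]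
  have h2 : Summable (fun n : ℕ => (n:ℝ) ^ 1 * r ^ n) :=
    summable_pow_mul_geometric_of_norm_lt_one 1 hn
  have h3 : Summable (fun n : ℕ => r ^ n) := summable_geometric_of_lt_one h0 h1
  have h4 := (h2.add h3).mul_left K
  apply h4.congr
  intro n; push_cast; ring

/-- The generating-function identity at good points. -/
lemma tsum_geom_Qpoly (s : ℕ) (hs : 1 ≤ s) (c : ℝ) (hc : 0 < c) (x : ℝ)
    (hx : |x - Real.sqrt s| ≤ 2 ∨ x = -1 / Real.sqrt s) :
    ∑' n : ℕ, Real.exp (-c) ^ n * (Qpoly s n).eval x = fc s c x := by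
  set r := Real.exp (-c) with hr
  have hr0 : 0 < r := Real.exp_pos _
  have hr1 : r < 1 := Real.exp_lt_one_iff.mpr (by linarith)
  have hs1 : (1:ℝ) ≤ Real.sqrt s := by
    rw [show (1:ℝ) = Real.sqrt 1 by simp]
    exact Real.sqrt_le_sqrt (by exact_mod_cast hs)
  set f : ℕ → ℝ := fun n => r ^ n * (Qpoly s n).eval x with hf
  have hbound : ∀ n, ‖f n‖ ≤ (Real.sqrt s + 1) * (n + 1) * r ^ n := by
    intro n
    rw [Real.norm_eq_abs, hf, abs_mul, abs_pow, abs_of_pos hr0]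
    calc r ^ n * |(Qpoly s n).eval x| ≤ r ^ n * ((Real.sqrt s + 1) * (n + 1)) := by
          apply mul_le_mul_of_nonneg_left (Qpoly_good_bound s hs x hx n) (by positivity)
      _ = (Real.sqrt s + 1) * (n + 1) * r ^ n := by ring
  have hB : Summable (fun n : ℕ => (Real.sqrt s + 1) * (n + 1) * r ^ n) :=
    summable_B _ r hr0.le hr1
  have hSf : Summable f := Summable.of_norm_bounded hB hbound
  have hS1 : Summable (fun n => f (n + 1)) := (summable_nat_add_iff 1).mpr hSf
  set T := ∑' n, f n with hT
  have h2 : ∀ n : ℕ, f (n + 2)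
      = (r * (x - Real.sqrt s)) * f (n + 1) - r ^ 2 * f n := by
    intro n
    simp only [hf]
    rw [Qpoly_eval_step]
    ring
  have key : ∑' n, f (n + 2)
      = (r * (x - Real.sqrt s)) * (∑' n, f (n + 1)) - r ^ 2 * T := by
    rw [tsum_congr h2, Summable.tsum_sub (hS1.mul_left _) (hSf.mul_left _),
      tsum_mul_left, tsum_mul_left]
  have zeroadd : T = f 0 + ∑' n, f (n + 1) := Summable.tsum_eq_zero_add hSf
  have twoadd : (∑ i ∈ Finset.range 2, f i) + ∑' n, f (n + 2) = T :=
    Summable.sum_add_tsum_nat_add 2 hSf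
  have f0 : f 0 = 1 := by simp [hf, Qpoly]
  have f1 : f 1 = r * x := by simp [hf, Qpoly]
  have e2 : ∑' n, f (n + 1) = T - 1 := by rw [zeroadd, f0]; ring
  have e1 : 1 + r * x + ((r * (x - Real.sqrt s)) * (T - 1) - r ^ 2 * T) = T := by
    rw [← e2, ← key, ← twoadd]
    simp [Finset.sum_range_succ, f0, f1]
  have main : (1 - r * (x - Real.sqrt s) + r ^ 2) * T = 1 + r * Real.sqrt s := by
    linear_combination -e1
  -- now identify with fc
  have hre : r * Real.exp c = 1 := by rw [hr, ← Real.exp_add]; simp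
  have hE1 : 1 < Real.exp c := Real.one_lt_exp_iff.mpr hc
  have hgt : 2 < Real.exp c + r := by nlinarith [hre]
  have ht2 : x - Real.sqrt s ≤ 2 := by
    rcases hx with hx | hx
    · exact (abs_le.mp hx).2
    · subst hx
      have : -1 / Real.sqrt s < 0 := by
        apply div_neg_of_neg_of_pos (by norm_num) (by linarith)
      linarith
  have hD : 0 < Real.exp c + Real.exp (-c) + Real.sqrt s - x := by
    rw [← hr]; linarith
  have hden2 : 0 < 1 - r * (x - Real.sqrt s) + r ^ 2 := by
    have : 1 - r * (x - Real.sqrt s) + r ^ 2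
        = r * (Real.exp c + Real.exp (-c) + Real.sqrt s - x) := by
      rw [← hr]; linear_combination -hre
    rw [this]
    exact mul_pos hr0 hD
  have hfc : fc s c x * (1 - r * (x - Real.sqrt s) + r ^ 2) = 1 + r * Real.sqrt s := by
    rw [fc, div_mul_eq_mul_div, div_eq_iff (ne_of_gt hD)]
    rw [← hr]
    linear_combination (r - x) * hre
  have : (1 - r * (x - Real.sqrt s) + r ^ 2) * T
      = (1 - r * (x - Real.sqrt s) + r ^ 2) * fc s c x := by
    rw [main]; linear_combination -hfc
  exact mul_left_cancel₀ (ne_of_gt hden2) this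

theorem stmt17 (s : ℕ) (hs : 1 ≤ s) (c : ℝ) (hc : 0 < c) (a : ℕ → ℕ → ℝ)
    (hbd : ∀ N n, |a N n| ≤ Real.exp (-(c * n)))
    (hlim : ∀ n, Filter.Tendsto (fun N => a N n) Filter.atTop
      (nhds (Real.exp (-(c * n))))) :
    ∃ g : ℕ → ℝ → ℝ,
      (∀ N, MemLp (g N) 2 (nuMeas s) ∧
        Filter.Tendsto
          (fun m => eLpNorm
            (fun x => (∑ n ∈ Finset.range m, a N n * (Qpoly s n).eval x) - g N x)
            2 (nuMeas s))
          Filter.atTop (nhds 0)) ∧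
      Filter.Tendsto (fun N => ∫ x, |g N x - fc s c x| ∂(nuMeas s))
        Filter.atTop (nhds 0) := by
  set r := Real.exp (-c) with hr
  have hr0 : 0 < r := Real.exp_pos _
  have hr1 : r < 1 := Real.exp_lt_one_iff.mpr (by linarith)
  have hexp : ∀ n : ℕ, Real.exp (-(c * n)) = r ^ n := by
    intro n
    rw [show -(c * (n:ℝ)) = (n:ℝ) * (-c) by ring, Real.exp_nat_mul]
  have hbd' : ∀ N n, |a N n| ≤ r ^ n := by
    intro N n; rw [← hexp n]; exact hbd N n
  set B : ℕ → ℝ := fun n => (Real.sqrt s + 1) * (n + 1) * r ^ n with hBdef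
  have hB : Summable B := summable_B _ r hr0.le hr1
  set C := ∑' n, B n with hC
  haveI := nuMeas_finite s hs
  have hae : ∀ᵐ x ∂(nuMeas s), |x - Real.sqrt s| ≤ 2 ∨ x = -1 / Real.sqrt s :=
    nuMeas_ae_good s hs
  -- uniform term bound at good points
  have hterm : ∀ (coef : ℕ → ℝ), (∀ n, |coef n| ≤ r ^ n) → ∀ x,
      (|x - Real.sqrt s| ≤ 2 ∨ x = -1 / Real.sqrt s) → ∀ n,
      ‖coef n * (Qpoly s n).eval x‖ ≤ B n := by
    intro coef hcoef x hx n
    rw [Real.norm_eq_abs, abs_mul]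
    calc |coef n| * |(Qpoly s n).eval x|
        ≤ r ^ n * ((Real.sqrt s + 1) * (n + 1)) :=
          mul_le_mul (hcoef n) (Qpoly_good_bound s hs x hx n) (abs_nonneg _)
            (by positivity)
      _ = B n := by rw [hBdef]; ring
  have hsm : ∀ (coef : ℕ → ℝ), (∀ n, |coef n| ≤ r ^ n) → ∀ x,
      (|x - Real.sqrt s| ≤ 2 ∨ x = -1 / Real.sqrt s) →
      Summable (fun n => coef n * (Qpoly s n).eval x) := by
    intro coef hcoef x hx
    exact Summable.of_norm_bounded hB (hterm coef hcoef x hx)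
  have htsum_le : ∀ (coef : ℕ → ℝ), (∀ n, |coef n| ≤ r ^ n) → ∀ x,
      (|x - Real.sqrt s| ≤ 2 ∨ x = -1 / Real.sqrt s) →
      |∑' n, coef n * (Qpoly s n).eval x| ≤ C := by
    intro coef hcoef x hx
    have hnrm : Summable (fun n => ‖coef n * (Qpoly s n).eval x‖) :=
      Summable.of_nonneg_of_le (fun n => norm_nonneg _) (hterm coef hcoef x hx) hB
    rw [← Real.norm_eq_abs]
    calc ‖∑' n, coef n * (Qpoly s n).eval x‖
        ≤ ∑' n, ‖coef n * (Qpoly s n).eval x‖ := norm_tsum_le_tsum_norm hnrm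
      _ ≤ C := Summable.tsum_le_tsum (hterm coef hcoef x hx) hnrm hB
  refine ⟨fun N x => ∑' n, a N n * (Qpoly s n).eval x, fun N => ⟨?_, ?_⟩, ?_⟩
  case refine_1 =>
    -- Memℒp
    have hgm : AEStronglyMeasurable (fun x => ∑' n, a N n * (Qpoly s n).eval x)
        (nuMeas s) := by
      apply aestronglyMeasurable_of_tendsto_ae (f := fun m x =>
          ∑ n ∈ Finset.range m, a N n * (Qpoly s n).eval x) atTop
      · intro m
        apply Continuous.aestronglyMeasurable
        exact continuous_finset_sum _ fun n _ => continuous_const.mul ((Qpoly s n).continuous)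
      · filter_upwards [hae] with x hx
        exact (hsm _ (hbd' N) x hx).hasSum.tendsto_sum_nat
    apply MemLp.of_bound hgm C
    filter_upwards [hae] with x hx
    rw [Real.norm_eq_abs]
    exact htsum_le _ (hbd' N) x hx
  case refine_2 =>
    -- L² convergence of partial sums
    set K := (nuMeas s Set.univ) ^ ((2:ℝ≥0∞).toReal⁻¹) with hK
    have hKne : K ≠ ∞ :=
      ne_of_lt (ENNReal.rpow_lt_top_of_nonneg (by norm_num) (measure_ne_top _ _))
    set tail : ℕ → ℝ := fun m => ∑' n, B (n + m) with htaildef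
    have htail0 : Tendsto tail atTop (nhds 0) := tendsto_sum_nat_add B
    have hbnd : ∀ m, eLpNorm
        (fun x => (∑ n ∈ Finset.range m, a N n * (Qpoly s n).eval x)
          - ∑' n, a N n * (Qpoly s n).eval x) 2 (nuMeas s)
        ≤ K * ENNReal.ofReal (tail m) := by
      intro m
      apply eLpNorm_le_of_ae_bound
      filter_upwards [hae] with x hx
      have hsum := hsm _ (hbd' N) x hx
      have heq := Summable.sum_add_tsum_nat_add m hsum
      have hBm : Summable (fun n => B (n + m)) := (summable_nat_add_iff m).mpr hB
      have hnrm : Summable (fun n => ‖a N (n + m) * (Qpoly s (n + m)).eval x‖) :=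
        Summable.of_nonneg_of_le (fun n => norm_nonneg _)
          (fun n => hterm _ (hbd' N) x hx (n + m)) hBm
      have hmain : (∑ n ∈ Finset.range m, a N n * (Qpoly s n).eval x)
          - ∑' n, a N n * (Qpoly s n).eval x
          = -(∑' n, a N (n + m) * (Qpoly s (n + m)).eval x) := by
        rw [← heq]; ring
      rw [Real.norm_eq_abs, hmain, abs_neg, ← Real.norm_eq_abs]
      calc ‖∑' n, a N (n + m) * (Qpoly s (n + m)).eval x‖
          ≤ ∑' n, ‖a N (n + m) * (Qpoly s (n + m)).eval x‖ :=
            norm_tsum_le_tsum_norm hnrm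
        _ ≤ tail m :=
            Summable.tsum_le_tsum (fun n => hterm _ (hbd' N) x hx (n + m)) hnrm hBm
    have hmul : Tendsto (fun m => K * ENNReal.ofReal (tail m)) atTop (nhds 0) := by
      have h1 : Tendsto (fun m => ENNReal.ofReal (tail m)) atTop (nhds 0) := by
        rw [show (0:ℝ≥0∞) = ENNReal.ofReal 0 by simp]
        exact ENNReal.tendsto_ofReal htail0
      have h2 := ENNReal.Tendsto.const_mul h1 (Or.inr hKne)
      simpa using h2
    exact tendsto_of_tendsto_of_tendsto_of_le_of_le tendsto_const_nhds hmul
      (fun m => zero_le) hbnd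
  case refine_3 =>
    -- L¹ convergence to fc
    have hgm : ∀ N, AEStronglyMeasurable (fun x => ∑' n, a N n * (Qpoly s n).eval x)
        (nuMeas s) := by
      intro N
      apply aestronglyMeasurable_of_tendsto_ae (f := fun m x =>
          ∑ n ∈ Finset.range m, a N n * (Qpoly s n).eval x) atTop
      · intro m
        apply Continuous.aestronglyMeasurable
        exact continuous_finset_sum _ fun n _ => continuous_const.mul ((Qpoly s n).continuous)
      · filter_upwards [hae] with x hx
        exact (hsm _ (hbd' N) x hx).hasSum.tendsto_sum_nat
    have hfcm : AEStronglyMeasurable (fun x => fc s c x) (nuMeas s) := by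
      apply Measurable.aestronglyMeasurable
      unfold fc
      exact measurable_const.div (measurable_const.sub measurable_id)
    have hrcoef : ∀ n : ℕ, |r ^ n| ≤ r ^ n := fun n => le_of_eq (abs_of_pos (by positivity))
    have hptlim : ∀ᵐ x ∂(nuMeas s), Tendsto
        (fun N => (∑' n, a N n * (Qpoly s n).eval x) - fc s c x) atTop (nhds 0) := by
      filter_upwards [hae] with x hx
      have hid := tsum_geom_Qpoly s hs c hc x hx
      have htt : Tendsto (fun N => ∑' n, a N n * (Qpoly s n).eval x) atTop
          (nhds (∑' n, r ^ n * (Qpoly s n).eval x)) := by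
        apply tendsto_tsum_of_dominated_convergence hB
        · intro k
          have := (hlim k).mul_const ((Qpoly s k).eval x)
          rwa [hexp k] at this
        · exact Eventually.of_forall fun N => hterm _ (hbd' N) x hx
      rw [hid] at htt
      simpa using htt.sub_const (fc s c x)
    have hboundae : ∀ N, ∀ᵐ x ∂(nuMeas s),
        ‖|(∑' n, a N n * (Qpoly s n).eval x) - fc s c x|‖ ≤ 2 * C := by
      intro N
      filter_upwards [hae] with x hx
      rw [Real.norm_eq_abs, abs_abs]
      have h1 := htsum_le _ (hbd' N) x hx
      have h2 : |fc s c x| ≤ C := by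
        rw [← tsum_geom_Qpoly s hs c hc x hx]
        exact htsum_le _ hrcoef x hx
      calc |(∑' n, a N n * (Qpoly s n).eval x) - fc s c x|
          ≤ |∑' n, a N n * (Qpoly s n).eval x| + |fc s c x| := abs_sub _ _
        _ ≤ 2 * C := by linarith
    have hfinal := tendsto_integral_of_dominated_convergence (μ := nuMeas s)
      (F := fun N x => |(∑' n, a N n * (Qpoly s n).eval x) - fc s c x|)
      (f := fun _ => 0) (bound := fun _ => 2 * C)
      (fun N => by
        have := ((hgm N).sub hfcm).norm
        simpa [Real.norm_eq_abs] using this)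
      (integrable_const _) hboundae
      (by
        filter_upwards [hptlim] with x hx
        simpa using hx.abs)
    simpa using hfinal
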